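/- Let L ≥ 2 and let d_0, d_1, …, d_L be positive integers with d_* := min{d_0, d_L} ≤ min{d_1, …, d_{L−1}}, and let 1 ≤ r ≤ d_*. Let U ∈ ℝ^{d_L×d_*} and V ∈ ℝ^{d_0×d_*} have orthonormal columns. Let I_r denote the d_*×d_* diagonal matrix whose first r diagonal entries are 1 and whose remaining entries are 0. Let Σ_xx ∈ ℝ^{d_0×d_0} be symmetric with Σ_xx V = V I_r, and set Σ_yx = U I_r Vᵀ. Fix η > 0 and initial values λ_{1,0}, …, λ_{d_*,0} > 0, let D_0 = diag(λ_{1,0}, …, λ_{d_*,0}), and initialize W^1_0 = pad_{d_1×d_0}(D_0 Vᵀ), W^L_0 = pad_{d_L×d_{L−1}}(U D_0), and W^k_0 = pad_{d_k×d_{k−1}}(D_0) for 1 < k < L. Run gradient descent W^l_{t+1} = W^l_t − η (W^{l+1}_t)ᵀ⋯(W^L_t)ᵀ (W^L_t⋯W^1_t Σ_xx − Σ_yx) (W^1_t)ᵀ⋯(W^{l−1}_t)ᵀ for each l. Then for every t ≥ 0 there is a diagonal matrix D_t = diag(λ_{1,t}, …, λ_{d_*,t}) such that W^1_t = pad_{d_1×d_0}(D_t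 Vᵀ), W^L_t = pad_{d_L×d_{L−1}}(U D_t), and W^k_t = pad_{d_k×d_{k−1}}(D_t) for 1 < k < L; moreover λ_{i,t+1} = λ_{i,t} − η λ_{i,t}^{2L−1} + η λ_{i,t}^{L−1} for 1 ≤ i ≤ r, and λ_{i,t} = λ_{i,0} for r < i ≤ d_*. -/

import Mathlib

open Matrix

/-- `padMat m n D` is the `m × n` matrix whose top-left `p × q` block is `D` and whose
remaining entries are zero (the padding operator `pad_{m×n}`). -/
def padMat {p q : ℕ} (m n : ℕ) (D : Matrix (Fin p) (Fin q) ℝ) : Matrix (Fin m) (Fin n) ℝ :=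
  Matrix.of fun i j =>
    if h : (i : ℕ) < p ∧ (j : ℕ) < q then D ⟨i, h.1⟩ ⟨j, h.2⟩ else 0

/-- `chainProd d W a = W^a * W^{a-1} * ⋯ * W^1` (the identity matrix for `a = 0`). -/
def chainProd (d : ℕ → ℕ) (W : ∀ l : ℕ, Matrix (Fin (d l)) (Fin (d (l - 1))) ℝ) :
    (a : ℕ) → Matrix (Fin (d a)) (Fin (d 0)) ℝ
  | 0 => 1
  | a + 1 => (show Matrix (Fin (d (a + 1))) (Fin (d a)) ℝ from W (a + 1)) * chainProd d W a

/-- `prodAbove d W l k = W^{l+k} * W^{l+k-1} * ⋯ * W^{l+1}` (the identity for `k = 0`). -/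
def prodAbove (d : ℕ → ℕ) (W : ∀ l : ℕ, Matrix (Fin (d l)) (Fin (d (l - 1))) ℝ) (l : ℕ) :
    (k : ℕ) → Matrix (Fin (d (l + k))) (Fin (d l)) ℝ
  | 0 => show Matrix (Fin (d (l + 0))) (Fin (d l)) ℝ from (1 : Matrix (Fin (d l)) (Fin (d l)) ℝ)
  | k + 1 => (show Matrix (Fin (d (l + k + 1))) (Fin (d (l + k))) ℝ from W (l + k + 1)) *
      prodAbove d W l k

lemma sum_fin_dite {n q : ℕ} (hq : q ≤ n) (g : Fin q → ℝ) :
    ∑ s : Fin n, (if h : (s : ℕ) < q then g ⟨s, h⟩ else 0) = ∑ t : Fin q, g t := by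
  have h1 : ∑ s : Fin n, (if h : (s : ℕ) < q then g ⟨s, h⟩ else 0)
      = ∑ s ∈ Finset.range n, (if h : s < q then g ⟨s, h⟩ else 0) :=
    Fin.sum_univ_eq_sum_range (fun s => if h : s < q then g ⟨s, h⟩ else 0) n
  have h2 : ∑ t : Fin q, g t = ∑ s ∈ Finset.range q, (if h : s < q then g ⟨s, h⟩ else 0) := by
    rw [← Fin.sum_univ_eq_sum_range (fun s => if h : s < q then g ⟨s, h⟩ else 0) q]
    exact Finset.sum_congr rfl fun t _ => by rw [dif_pos t.isLt]
  rw [h1, h2]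
  exact (Finset.sum_subset (Finset.range_subset_range.2 hq) fun x _ hx =>
    dif_neg (by simpa using hx)).symm

lemma padMat_full {m n : ℕ} (A : Matrix (Fin m) (Fin n) ℝ) : padMat m n A = A := by
  ext i j
  simp [padMat, i.isLt, j.isLt]

lemma padMat_transpose {p q m n : ℕ} (A : Matrix (Fin p) (Fin q) ℝ) :
    (padMat m n A)ᵀ = padMat n m Aᵀ := by
  ext i j
  simp only [padMat, transpose_apply, of_apply]
  by_cases h1 : (j : ℕ) < p <;> by_cases h2 : (i : ℕ) < q
  · rw [dif_pos ⟨h1, h2⟩, dif_pos ⟨h2, h1⟩]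
  · rw [dif_neg (by tauto), dif_neg (by tauto)]
  · rw [dif_neg (by tauto), dif_neg (by tauto)]
  · rw [dif_neg (by tauto), dif_neg (by tauto)]

lemma padMat_sub_smul {p q m n : ℕ} (A B : Matrix (Fin p) (Fin q) ℝ) (c : ℝ) :
    padMat m n A - c • padMat m n B = padMat m n (A - c • B) := by
  ext i j
  simp only [padMat, Matrix.sub_apply, Matrix.smul_apply, of_apply]
  split_ifs <;> simp

lemma padMat_mul {p q k m n o : ℕ} (hq : q ≤ n)
    (A : Matrix (Fin p) (Fin q) ℝ) (B : Matrix (Fin q) (Fin k) ℝ) :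
    padMat m n A * padMat n o B = padMat m o (A * B) := by
  ext i j
  rw [Matrix.mul_apply]
  by_cases hi : (i : ℕ) < p
  · by_cases hj : (j : ℕ) < k
    · have hr : padMat m o (A * B) i j = ∑ s : Fin q, A ⟨i, hi⟩ s * B s ⟨j, hj⟩ := by
        simp only [padMat, of_apply]
        rw [dif_pos ⟨hi, hj⟩, Matrix.mul_apply]
      rw [hr, ← sum_fin_dite hq (fun s => A ⟨i, hi⟩ s * B s ⟨j, hj⟩)]
      refine Finset.sum_congr rfl fun s _ => ?_
      by_cases hs : (s : ℕ) < q
      · simp only [padMat, of_apply]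
        rw [dif_pos (⟨hi, hs⟩ : (i:ℕ) < p ∧ (s:ℕ) < q), dif_pos (⟨hs, hj⟩ : (s:ℕ) < q ∧ (j:ℕ) < k),
          dif_pos hs]
      · simp only [padMat, of_apply]
        rw [dif_neg hs, dif_neg (fun hh : (i:ℕ) < p ∧ (s:ℕ) < q => hs hh.2), zero_mul]
    · simp only [padMat, of_apply]
      rw [dif_neg (fun hh : (i:ℕ) < p ∧ (j:ℕ) < k => hj hh.2)]
      refine Finset.sum_eq_zero fun s _ => ?_
      by_cases hs : (s : ℕ) < q
      · rw [dif_neg (fun hh : (s:ℕ) < q ∧ (j:ℕ) < k => hj hh.2), mul_zero]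
      · rw [dif_neg (fun hh : (i:ℕ) < p ∧ (s:ℕ) < q => hs hh.2), zero_mul]
  · simp only [padMat, of_apply]
    rw [dif_neg (fun hh : (i:ℕ) < p ∧ (j:ℕ) < k => hi hh.1)]
    refine Finset.sum_eq_zero fun s _ => ?_
    rw [dif_neg (fun hh : (i:ℕ) < p ∧ (s:ℕ) < q => hi hh.1), zero_mul]

lemma submatrix_mul_id {a a' b c : ℕ} (r : Fin a' → Fin a)
    (A : Matrix (Fin a) (Fin b) ℝ) (B : Matrix (Fin b) (Fin c) ℝ) :
    (A * B).submatrix r id = A.submatrix r id * B := by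
  ext i j
  simp [Matrix.mul_apply]

lemma submatrix_cast_pad (d' : ℕ → ℕ) (X : ∀ l : ℕ, Matrix (Fin (d' l)) (Fin (d' (l - 1))) ℝ)
    (u v : ℕ) (h : u = v) {p q : ℕ} (A : Matrix (Fin p) (Fin q) ℝ)
    (hu : X u = padMat (d' u) (d' (u - 1)) A) (e : d' u = d' v) :
    (X v).submatrix (Fin.cast e) id = padMat (d' u) (d' (v - 1)) A := by
  subst h
  rw [hu]
  ext i j
  rfl

lemma prodAbove_zero_cast (d' : ℕ → ℕ) (X : ∀ l : ℕ, Matrix (Fin (d' l)) (Fin (d' (l - 1))) ℝ)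
    (l k : ℕ) (hk : k = 0) (e : d' l = d' (l + k)) :
    (prodAbove d' X l k)ᵀ.submatrix id (Fin.cast e) = (1 : Matrix (Fin (d' l)) (Fin (d' l)) ℝ) := by
  subst hk
  have h1 : (prodAbove d' X l 0)ᵀ = (1 : Matrix (Fin (d' l)) (Fin (d' l)) ℝ) := by
    rw [show prodAbove d' X l 0 = (1 : Matrix (Fin (d' l)) (Fin (d' l)) ℝ) from rfl,
      Matrix.transpose_one]
  rw [h1]
  ext i j
  rw [Matrix.submatrix_apply, show Fin.cast e j = j from Fin.ext rfl]
  rfl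

lemma diag_pow {s : ℕ} (v : Fin s → ℝ) (k : ℕ) :
    Matrix.diagonal v ^ k = Matrix.diagonal (fun i => v i ^ k) := by
  induction k with
  | zero => simp
  | succ k ih =>
    rw [pow_succ, ih, Matrix.diagonal_mul_diagonal]
    simp [pow_succ]

/-- Shared spectral structure of balanced gradient descent. For a depth-`L`
deep linear network with widths `d 0, …, d L`, `d_* = min (d 0) (d L) ≤` hidden widths,
orthonormal `U, V`, whitened data (`Σ_xx V = V 𝓘_r`), aligned target `Σ_yx = U 𝓘_r Vᵀ`, and
balanced initialization `W¹₀ = pad(D₀Vᵀ)`, `Wᴸ₀ = pad(UD₀)`, `Wᵏ₀ = pad(D₀)`, gradient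
descent preserves the padded-diagonal structure: at every time `t` there is a diagonal
`D_t = diag(λ_{1,t},…,λ_{d_*,t})` with `W¹_t = pad(D_tVᵀ)`, `Wᴸ_t = pad(UD_t)`,
`Wᵏ_t = pad(D_t)`; the first `r` eigenvalues follow
`λ_{i,t+1} = λ_{i,t} − η λ_{i,t}^{2L−1} + η λ_{i,t}^{L−1}` and the rest stay fixed. -/
theorem statement0 (L : ℕ) (hL : 2 ≤ L)
    (d : ℕ → ℕ) (hd : ∀ l, l ≤ L → 0 < d l)
    (hwidth : ∀ l, 1 ≤ l → l ≤ L - 1 → min (d 0) (d L) ≤ d l)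
    (r : ℕ) (hr1 : 1 ≤ r) (hr : r ≤ min (d 0) (d L))
    (U : Matrix (Fin (d L)) (Fin (min (d 0) (d L))) ℝ)
    (V : Matrix (Fin (d 0)) (Fin (min (d 0) (d L))) ℝ)
    (hU : Uᵀ * U = 1) (hV : Vᵀ * V = 1)
    (Sxx : Matrix (Fin (d 0)) (Fin (d 0)) ℝ) (hSxxSym : Sxxᵀ = Sxx)
    (hSxxV : Sxx * V = V * Matrix.diagonal
      (fun i : Fin (min (d 0) (d L)) => if (i : ℕ) < r then (1 : ℝ) else 0))
    (η : ℝ) (hη : 0 < η)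
    (lam0 : Fin (min (d 0) (d L)) → ℝ) (hlam0 : ∀ i, 0 < lam0 i)
    (W : ℕ → ∀ l : ℕ, Matrix (Fin (d l)) (Fin (d (l - 1))) ℝ)
    (hW1 : W 0 1 = padMat (d 1) (d 0) (Matrix.diagonal lam0 * Vᵀ))
    (hWL : W 0 L = padMat (d L) (d (L - 1)) (U * Matrix.diagonal lam0))
    (hWmid : ∀ k, 1 < k → k < L → W 0 k = padMat (d k) (d (k - 1)) (Matrix.diagonal lam0))
    (hGD : ∀ t, ∀ l, 1 ≤ l → ∀ hlL : l ≤ L,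
      W (t + 1) l = W t l - η •
        (((prodAbove d (W t) l (L - l)).transpose.submatrix id
            (Fin.cast (congrArg d (Nat.add_sub_cancel' hlL)).symm)) *
          (chainProd d (W t) L * Sxx -
            U * Matrix.diagonal
              (fun i : Fin (min (d 0) (d L)) => if (i : ℕ) < r then (1 : ℝ) else 0) * Vᵀ) *
          (chainProd d (W t) (l - 1)).transpose)) :
    ∃ lam : ℕ → Fin (min (d 0) (d L)) → ℝ,
      lam 0 = lam0 ∧
      (∀ t, W t 1 = padMat (d 1) (d 0) (Matrix.diagonal (lam t) * Vᵀ)) ∧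
      (∀ t, W t L = padMat (d L) (d (L - 1)) (U * Matrix.diagonal (lam t))) ∧
      (∀ t k, 1 < k → k < L →
        W t k = padMat (d k) (d (k - 1)) (Matrix.diagonal (lam t))) ∧
      (∀ t, ∀ i : Fin (min (d 0) (d L)), (i : ℕ) < r →
        lam (t + 1) i = lam t i - η * lam t i ^ (2 * L - 1) + η * lam t i ^ (L - 1)) ∧
      (∀ t, ∀ i : Fin (min (d 0) (d L)), r ≤ (i : ℕ) → lam t i = lam0 i) := by
  obtain ⟨m, rfl⟩ : ∃ m, L = m + 2 := ⟨L - 2, by omega⟩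
  let lam : ℕ → Fin (min (d 0) (d (m + 2))) → ℝ := fun t =>
    Nat.rec lam0 (fun _ prev => fun i =>
      prev i - η * ((prev i ^ (m + 2) * (if (i : ℕ) < r then (1 : ℝ) else 0)
        - (if (i : ℕ) < r then (1 : ℝ) else 0)) * prev i ^ (m + 1))) t
  have hlamS : ∀ t i, lam (t + 1) i = lam t i - η * ((lam t i ^ (m + 2) *
      (if (i : ℕ) < r then (1 : ℝ) else 0) - (if (i : ℕ) < r then (1 : ℝ) else 0)) *
      lam t i ^ (m + 1)) := fun _ _ => rfl
  have hDsucc : ∀ t, Matrix.diagonal (lam (t + 1)) = Matrix.diagonal (lam t) -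
      η • Matrix.diagonal (fun i => (lam t i ^ (m + 2) * (if (i : ℕ) < r then (1 : ℝ) else 0)
        - (if (i : ℕ) < r then (1 : ℝ) else 0)) * lam t i ^ (m + 1)) := by
    intro t
    ext i j
    rcases eq_or_ne i j with rfl | hne
    · simp [Matrix.diagonal_apply_eq, hlamS]
    · simp [Matrix.diagonal_apply_ne _ hne, hne]
  have key : ∀ t, W t 1 = padMat (d 1) (d 0) (Matrix.diagonal (lam t) * Vᵀ) ∧
      W t (m + 2) = padMat (d (m + 2)) (d (m + 2 - 1)) (U * Matrix.diagonal (lam t)) ∧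
      (∀ k, 1 < k → k < m + 2 → W t k = padMat (d k) (d (k - 1)) (Matrix.diagonal (lam t))) := by
    intro t
    induction t with
    | zero => exact ⟨hW1, hWL, hWmid⟩
    | succ t ih =>
      obtain ⟨ih1, ihL, ihmid⟩ := ih
      -- prodAbove in the bulk
      have hA : ∀ k l, 1 ≤ l → l + k ≤ m + 1 → 1 ≤ k →
          prodAbove d (W t) l k = padMat (d (l + k)) (d l) (Matrix.diagonal (lam t) ^ k) := by
        intro k
        induction k with
        | zero => intro l _ _ h; omega
        | succ k ihk =>
          intro l hl hlk _
          have hstep : prodAbove d (W t) l (k + 1) = (show Matrix (Fin (d (l + k + 1))) (Fin (d (l + k))) ℝ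
              from W t (l + k + 1)) * prodAbove d (W t) l k := rfl
          rcases Nat.eq_zero_or_pos k with hk0 | hk1
          · subst hk0
            rw [hstep, show prodAbove d (W t) l 0 =
                (1 : Matrix (Fin (d l)) (Fin (d l)) ℝ) from rfl, Matrix.mul_one]
            have hmid' : W t (l + 0 + 1) = padMat (d (l + 0 + 1)) (d l)
                (Matrix.diagonal (lam t)) := ihmid (l + 0 + 1) (by omega) (by omega)
            rw [hmid']
            congr 1
            rw [pow_succ, pow_zero, Matrix.one_mul]
          · rw [hstep, ihk l hl (by omega) hk1]
            have hmid' : W t (l + k + 1) = padMat (d (l + k + 1)) (d (l + k))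
                (Matrix.diagonal (lam t)) := ihmid (l + k + 1) (by omega) (by omega)
            rw [hmid', padMat_mul (hwidth (l + k) (by omega) (by omega)), ← pow_succ']
            rfl
      -- chainProd in the bulk
      have hCL : ∀ a, 1 ≤ a → a ≤ m + 1 → chainProd d (W t) a =
          padMat (d a) (d 0) (Matrix.diagonal (lam t) ^ a * Vᵀ) := by
        intro a
        induction a with
        | zero => omega
        | succ a iha =>
          intro _ ha
          rcases Nat.eq_zero_or_pos a with h0 | h1
          · subst h0
            rw [show chainProd d (W t) (0 + 1) = (show Matrix (Fin (d (0 + 1))) (Fin (d 0)) ℝ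
                from W t (0 + 1)) * chainProd d (W t) 0 from rfl,
              show chainProd d (W t) 0 = (1 : Matrix (Fin (d 0)) (Fin (d 0)) ℝ) from rfl,
              Matrix.mul_one,
              show W t (0 + 1) = padMat (d (0 + 1)) (d 0) (Matrix.diagonal (lam t) * Vᵀ) from ih1]
            congr 1
            rw [pow_succ, pow_zero, Matrix.one_mul]
          · rw [show chainProd d (W t) (a + 1) = (show Matrix (Fin (d (a + 1))) (Fin (d a)) ℝ
                from W t (a + 1)) * chainProd d (W t) a from rfl,
              iha h1 (by omega)]
            have hmid' : W t (a + 1) = padMat (d (a + 1)) (d a)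
                (Matrix.diagonal (lam t)) := ihmid (a + 1) (by omega) (by omega)
            rw [hmid', padMat_mul (hwidth a h1 (by omega))]
            congr 1
            rw [← Matrix.mul_assoc, ← pow_succ']
      -- chainProd at the top
      have hCLL : chainProd d (W t) (m + 2) = U * Matrix.diagonal (lam t) ^ (m + 2) * Vᵀ := by
        rw [show chainProd d (W t) (m + 2) = (show Matrix (Fin (d (m + 2))) (Fin (d (m + 1))) ℝ
            from W t (m + 2)) * chainProd d (W t) (m + 1) from rfl,
          hCL (m + 1) (by omega) le_rfl,
          show W t (m + 2) = padMat (d (m + 2)) (d (m + 1)) (U * Matrix.diagonal (lam t))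
            from ihL,
          padMat_mul (hwidth (m + 1) (by omega) (by omega)), padMat_full]
        rw [← Matrix.mul_assoc, Matrix.mul_assoc U, ← pow_succ']
      -- casted prodAbove reaching the top
      have hB : ∀ l k, 1 ≤ l → l ≤ m + 1 → l + k = m + 2 → ∀ e : d (m + 2) = d (l + k),
          (prodAbove d (W t) l k).submatrix (Fin.cast e) id =
            padMat (d (m + 2)) (d l) (U * Matrix.diagonal (lam t) ^ k) := by
        intro l k hl hl2 hk e
        cases k with
        | zero => omega
        | succ k =>
          rw [show prodAbove d (W t) l (k + 1) = (show Matrix (Fin (d (l + k + 1))) (Fin (d (l + k))) ℝ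
              from W t (l + k + 1)) * prodAbove d (W t) l k from rfl, submatrix_mul_id]
          have hcast : (W t (l + k + 1)).submatrix (Fin.cast e) id =
              padMat (d (m + 2)) (d (l + k)) (U * Matrix.diagonal (lam t)) :=
            submatrix_cast_pad d (W t) (m + 2) (l + k + 1) (by omega)
              (U * Matrix.diagonal (lam t)) ihL e
          rw [hcast]
          cases k with
          | zero =>
            rw [show prodAbove d (W t) l 0 = (1 : Matrix (Fin (d l)) (Fin (d l)) ℝ) from rfl,
              Matrix.mul_one]
            show padMat (d (m + 2)) (d l) (U * Matrix.diagonal (lam t)) = _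
            congr 1
            rw [pow_succ, pow_zero, Matrix.one_mul]
          | succ k =>
            rw [hA (k + 1) l hl (by omega) (by omega),
              padMat_mul (hwidth (l + (k + 1)) (by omega) (by omega))]
            congr 1
            rw [Matrix.mul_assoc, ← pow_succ']
      -- the residual term
      have hErr : chainProd d (W t) (m + 2) * Sxx - U * Matrix.diagonal
          (fun i : Fin (min (d 0) (d (m + 2))) => if (i : ℕ) < r then (1 : ℝ) else 0) * Vᵀ =
          U * Matrix.diagonal (fun i : Fin (min (d 0) (d (m + 2))) => lam t i ^ (m + 2) *
            (if (i : ℕ) < r then (1 : ℝ) else 0) - (if (i : ℕ) < r then (1 : ℝ) else 0)) * Vᵀ := by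
        have hVS : Vᵀ * Sxx = Matrix.diagonal
            (fun i : Fin (min (d 0) (d (m + 2))) => if (i : ℕ) < r then (1 : ℝ) else 0) * Vᵀ := by
          have h := congrArg Matrix.transpose hSxxV
          rw [Matrix.transpose_mul, Matrix.transpose_mul, hSxxSym,
            Matrix.diagonal_transpose] at h
          exact h
        rw [hCLL, Matrix.mul_assoc (U * Matrix.diagonal (lam t) ^ (m + 2)) Vᵀ Sxx, hVS,
          ← Matrix.mul_assoc (U * Matrix.diagonal (lam t) ^ (m + 2)) _ Vᵀ,
          Matrix.mul_assoc U (Matrix.diagonal (lam t) ^ (m + 2)) _,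
          ← Matrix.sub_mul, ← Matrix.mul_sub, diag_pow, Matrix.diagonal_mul_diagonal,
          Matrix.diagonal_sub]
      -- sandwich identities
      have hinner : ∀ a b : ℕ, a + b = m + 1 →
          Matrix.diagonal (lam t) ^ a * Uᵀ * (U * Matrix.diagonal (fun i : Fin (min (d 0) (d (m + 2))) =>
            lam t i ^ (m + 2) * (if (i : ℕ) < r then (1 : ℝ) else 0) -
            (if (i : ℕ) < r then (1 : ℝ) else 0)) * Vᵀ) * (V * Matrix.diagonal (lam t) ^ b) =
          Matrix.diagonal (fun i : Fin (min (d 0) (d (m + 2))) => (lam t i ^ (m + 2) *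
            (if (i : ℕ) < r then (1 : ℝ) else 0) - (if (i : ℕ) < r then (1 : ℝ) else 0)) *
            lam t i ^ (m + 1)) := by
        intro a b hab
        simp only [Matrix.mul_assoc]
        rw [← Matrix.mul_assoc Vᵀ V, hV, Matrix.one_mul, ← Matrix.mul_assoc Uᵀ U, hU,
          Matrix.one_mul, diag_pow, diag_pow, Matrix.diagonal_mul_diagonal,
          Matrix.diagonal_mul_diagonal]
        refine congrArg Matrix.diagonal (funext fun i => ?_)
        have hp : lam t i ^ a * lam t i ^ b = lam t i ^ (m + 1) := by
          rw [← pow_add, hab]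
        rw [← hp]
        ring
      have hinner1 : Matrix.diagonal (lam t) ^ (m + 2 - 1) * Uᵀ *
          (U * Matrix.diagonal (fun i : Fin (min (d 0) (d (m + 2))) => lam t i ^ (m + 2) *
            (if (i : ℕ) < r then (1 : ℝ) else 0) - (if (i : ℕ) < r then (1 : ℝ) else 0)) * Vᵀ) =
          Matrix.diagonal (fun i : Fin (min (d 0) (d (m + 2))) => (lam t i ^ (m + 2) *
            (if (i : ℕ) < r then (1 : ℝ) else 0) - (if (i : ℕ) < r then (1 : ℝ) else 0)) *
            lam t i ^ (m + 1)) * Vᵀ := by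
        simp only [Matrix.mul_assoc]
        rw [← Matrix.mul_assoc Uᵀ U, hU, Matrix.one_mul, ← Matrix.mul_assoc, diag_pow,
          Matrix.diagonal_mul_diagonal]
        refine congrArg (fun X => X * Vᵀ) (congrArg Matrix.diagonal (funext fun i => ?_))
        rw [show m + 2 - 1 = m + 1 from rfl]
        ring
      have hinnerL : (U * Matrix.diagonal (fun i : Fin (min (d 0) (d (m + 2))) => lam t i ^ (m + 2) *
            (if (i : ℕ) < r then (1 : ℝ) else 0) - (if (i : ℕ) < r then (1 : ℝ) else 0)) * Vᵀ) *
            (V * Matrix.diagonal (lam t) ^ (m + 2 - 1)) =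
          U * Matrix.diagonal (fun i : Fin (min (d 0) (d (m + 2))) => (lam t i ^ (m + 2) *
            (if (i : ℕ) < r then (1 : ℝ) else 0) - (if (i : ℕ) < r then (1 : ℝ) else 0)) *
            lam t i ^ (m + 1)) := by
        simp only [Matrix.mul_assoc]
        rw [← Matrix.mul_assoc Vᵀ V, hV, Matrix.one_mul, diag_pow,
          Matrix.diagonal_mul_diagonal]
        refine congrArg (fun X => U * X) (congrArg Matrix.diagonal (funext fun i => ?_))
        rw [show m + 2 - 1 = m + 1 from rfl]
      refine ⟨?_, ?_, ?_⟩
      · -- layer 1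
        have hc0 : (chainProd d (W t) (1 - 1))ᵀ = (1 : Matrix (Fin (d 0)) (Fin (d 0)) ℝ) := by
          rw [show chainProd d (W t) (1 - 1) = (1 : Matrix (Fin (d 0)) (Fin (d 0)) ℝ) from rfl,
            Matrix.transpose_one]
        rw [hGD t 1 (le_refl 1) (by omega), ← Matrix.transpose_submatrix,
          hB 1 (m + 2 - 1) (by omega) (by omega) (by omega), hErr, hc0, Matrix.mul_one,
          ih1, padMat_transpose]
        simp only [Matrix.transpose_mul, Matrix.transpose_transpose, Matrix.transpose_pow,
          Matrix.diagonal_transpose]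
        rw [show U * Matrix.diagonal (fun i : Fin (min (d 0) (d (m + 2))) => lam t i ^ (m + 2) *
            (if (i : ℕ) < r then (1 : ℝ) else 0) - (if (i : ℕ) < r then (1 : ℝ) else 0)) * Vᵀ =
            padMat (d (m + 2)) (d 0) (U * Matrix.diagonal (fun i : Fin (min (d 0) (d (m + 2))) => lam t i ^ (m + 2) *
            (if (i : ℕ) < r then (1 : ℝ) else 0) - (if (i : ℕ) < r then (1 : ℝ) else 0)) * Vᵀ)
            from (padMat_full _).symm,
          padMat_mul (le_refl (d (m + 2))), padMat_sub_smul]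
        congr 1
        rw [hinner1, hDsucc, Matrix.sub_mul, Matrix.smul_mul]
      · -- layer L
        rw [hGD t (m + 2) (by omega) (le_refl (m + 2)),
          prodAbove_zero_cast d (W t) (m + 2) (m + 2 - (m + 2)) (by omega), Matrix.one_mul,
          hErr, hCL (m + 2 - 1) (by omega) (by omega), ihL, padMat_transpose]
        simp only [Matrix.transpose_mul, Matrix.transpose_transpose, Matrix.transpose_pow,
          Matrix.diagonal_transpose]
        rw [show U * Matrix.diagonal (fun i : Fin (min (d 0) (d (m + 2))) => lam t i ^ (m + 2) *
            (if (i : ℕ) < r then (1 : ℝ) else 0) - (if (i : ℕ) < r then (1 : ℝ) else 0)) * Vᵀ =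
            padMat (d (m + 2)) (d 0) (U * Matrix.diagonal (fun i : Fin (min (d 0) (d (m + 2))) => lam t i ^ (m + 2) *
            (if (i : ℕ) < r then (1 : ℝ) else 0) - (if (i : ℕ) < r then (1 : ℝ) else 0)) * Vᵀ)
            from (padMat_full _).symm,
          padMat_mul (le_refl (d 0)), padMat_sub_smul]
        congr 1
        rw [hinnerL, hDsucc, Matrix.mul_sub, Matrix.mul_smul]
      · -- middle layers
        intro l h1 h2
        have hWtl : W t l = padMat (d l) (d (l - 1)) (Matrix.diagonal (lam t)) := ihmid l h1 h2
        rw [hGD t l (by omega) (by omega), ← Matrix.transpose_submatrix,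
          hB l (m + 2 - l) (by omega) (by omega) (by omega), hErr,
          hCL (l - 1) (by omega) (by omega), hWtl, padMat_transpose, padMat_transpose]
        simp only [Matrix.transpose_mul, Matrix.transpose_transpose, Matrix.transpose_pow,
          Matrix.diagonal_transpose]
        rw [show U * Matrix.diagonal (fun i : Fin (min (d 0) (d (m + 2))) => lam t i ^ (m + 2) *
            (if (i : ℕ) < r then (1 : ℝ) else 0) - (if (i : ℕ) < r then (1 : ℝ) else 0)) * Vᵀ =
            padMat (d (m + 2)) (d 0) (U * Matrix.diagonal (fun i : Fin (min (d 0) (d (m + 2))) => lam t i ^ (m + 2) *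
            (if (i : ℕ) < r then (1 : ℝ) else 0) - (if (i : ℕ) < r then (1 : ℝ) else 0)) * Vᵀ)
            from (padMat_full _).symm,
          padMat_mul (le_refl (d (m + 2))), padMat_mul (le_refl (d 0)), padMat_sub_smul]
        congr 1
        rw [hinner (m + 2 - l) (l - 1) (by omega), hDsucc]
  refine ⟨lam, rfl, fun t => (key t).1, fun t => (key t).2.1,
    fun t k h1 h2 => (key t).2.2 k h1 h2, ?_, ?_⟩
  · intro t i hi
    rw [hlamS, if_pos hi, show 2 * (m + 2) - 1 = (m + 2) + (m + 1) from by omega,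
      show m + 2 - 1 = m + 1 from rfl, pow_add]
    ring
  · intro t i hi
    induction t with
    | zero => rfl
    | succ t ih =>
      rw [hlamS, if_neg (show ¬((i:ℕ) < r) from by omega), ih]
      ring
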